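/- arXiv:2301.12513 — 3 statements merged into one kernel-verified Lean document; each statement's English description precedes it below -/
import Mathlib

section
/- For every d ∈ ℕ there exist k ∈ ℕ, a unit vector ψ ∈ ℝ^k and an n-tuple X of k×k real symmetric matrices such that the real symmetric matrix indexed by words u, w ∈ ⟨x⟩ of length at most d, with (u,w)-entry ⟨u(X)·w(X)ᵀ ψ, ψ⟩, is positive definite. -/
open scoped BigOperators Matrix Kronecker

namespace StatePoly

/-! ### Words and symmetrized words -/

/-- Words in the letters `x_1, …, x_n`: the free monoid on `Fin n`. -/
abbrev Word (n : ℕ) := FreeMonoid (Fin n)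

/-- The word reversal (the involution `⋆` on words). -/
def wordRev {n : ℕ} (w : Word n) : Word n := FreeMonoid.reverse w

/-- Two nonempty words are identified iff they are equal or reverses of each other;
this realizes the relation `ς(w) = ς(w⋆)`. -/
def wordSetoid (n : ℕ) : Setoid {l : List (Fin n) // l ≠ []} where
  r u v := u.1 = v.1 ∨ u.1 = v.1.reverse
  iseqv := by
    constructor
    · intro u; exact Or.inl rfl
    · rintro u v (h | h)
      · exact Or.inl h.symm
      · right; rw [h, List.reverse_reverse]
    · rintro u v w (h1 | h1) (h2 | h2)
      · exact Or.inl (h1.trans h2)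
      · right; rw [h1, h2]
      · right; rw [h1, h2]
      · left; rw [h1, h2, List.reverse_reverse]

/-- Symbols `ς(w)`, `w` a nonempty word, modulo `ς(w) = ς(w⋆)`. -/
def SW (n : ℕ) := Quotient (wordSetoid n)

/-- The commutative algebra `𝒮` of state polynomials:
a polynomial ring in the symbols `ς(w)`. -/
abbrev SPoly (n : ℕ) := MvPolynomial (SW n) ℝ

/-- The algebra `𝐒 = 𝒮 ⊗ ℝ⟨x⟩` of nc state polynomials, realized as the monoid algebra
of the free monoid over the polynomial ring `𝒮`. -/
abbrev NCSPoly (n : ℕ) := MonoidAlgebra (SPoly n) (Word n)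

variable {n : ℕ}

/-- The state symbol `ς(w)` of a word, with `ς(1) = 1`. -/
noncomputable def sigWordL (l : List (Fin n)) : SPoly n :=
  if h : l = [] then 1 else MvPolynomial.X (Quotient.mk (wordSetoid n) ⟨l, h⟩)

/-- The unital `𝒮`-linear map `ς : 𝐒 → 𝒮`. -/
noncomputable def sig (f : NCSPoly n) : SPoly n :=
  Finsupp.sum f.coeff fun w c => c * sigWordL (FreeMonoid.toList w)

/-- The involution `⋆` on `𝐒`: it fixes `𝒮 ∪ {x_1, …, x_n}` pointwise and reverses words. -/
noncomputable def ncStar (f : NCSPoly n) : NCSPoly n :=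
  MonoidAlgebra.ofCoeff (Finsupp.mapDomain wordRev f.coeff)

/-- The embedding `𝒮 ⊆ 𝐒`. -/
noncomputable def iotaS (p : SPoly n) : NCSPoly n := MonoidAlgebra.single 1 p

/-- The variable `x_i` as an nc state polynomial. -/
noncomputable def ncX (i : Fin n) : NCSPoly n := MonoidAlgebra.single (FreeMonoid.of i) 1

/-- A real constant as an nc state polynomial. -/
noncomputable def ncConst (r : ℝ) : NCSPoly n := iotaS (MvPolynomial.C r)

/-- `f ∈ 𝐒` lies in the free algebra `ℝ⟨x⟩ ⊆ 𝐒` iff all its coefficients are real constants. -/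
def IsFreePoly (f : NCSPoly n) : Prop := ∀ w : Word n, ∃ r : ℝ, f.coeff w = MvPolynomial.C r

/-! ### Degrees -/

/-- `|w|` on symmetrized words. -/
def swDeg : SW n → ℕ :=
  Quotient.lift (fun l : {l : List (Fin n) // l ≠ []} => l.1.length)
    (by rintro u v (h | h) <;> simp [h])

/-- The degree of a monomial `∏ ς(u_j)^{e_j}`, namely `∑ e_j |u_j|`. -/
def monoWeight (m : SW n →₀ ℕ) : ℕ := m.sum fun q e => e * swDeg q

/-- The degree of a state polynomial. -/
noncomputable def sDeg (p : SPoly n) : ℕ := p.support.sup monoWeight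

/-- The degree of an nc state polynomial: the maximum over the `𝐒`-words appearing in it of
`deg ς(u_1)⋯ς(u_m)v = |v| + ∑_j |u_j|`. -/
noncomputable def ncDeg (f : NCSPoly n) : ℕ :=
  (Finsupp.support f.coeff).sup fun w => sDeg (f.coeff w) + (FreeMonoid.toList w).length

lemma sDeg_zero : sDeg (0 : SPoly n) = 0 := by
  simp [sDeg, MvPolynomial.support_zero]

lemma sDeg_add_le (p q : SPoly n) : sDeg (p + q) ≤ max (sDeg p) (sDeg q) := by
  classical
  refine Finset.sup_le fun m hm => ?_
  rcases Finset.mem_union.mp (MvPolynomial.support_add hm) with h | h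
  · exact le_max_of_le_left (Finset.le_sup h)
  · exact le_max_of_le_right (Finset.le_sup h)

lemma sDeg_smul_le (c : ℝ) (p : SPoly n) : sDeg (c • p) ≤ sDeg p :=
  Finset.sup_le fun _m hm => Finset.le_sup (MvPolynomial.support_smul hm)

lemma sDeg_one : sDeg (1 : SPoly n) = 0 := by
  classical
  refine le_antisymm (Finset.sup_le fun m hm => ?_) (Nat.zero_le _)
  have : m = 0 := by
    by_contra h
    have := MvPolynomial.mem_support_iff.mp hm
    rw [MvPolynomial.coeff_one, if_neg (fun he => h he.symm)] at this
    exact this rfl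
  subst this
  simp [monoWeight]

/-- The subspace `𝒮_{k}` of state polynomials of degree at most `k`. -/
noncomputable def SPolyLe (n k : ℕ) : Submodule ℝ (SPoly n) where
  carrier := {p | sDeg p ≤ k}
  add_mem' := fun {p q} hp hq =>
    le_trans (sDeg_add_le p q) (max_le hp hq)
  zero_mem' := by simp [Set.mem_setOf_eq, sDeg_zero]
  smul_mem' := fun c p hp => le_trans (sDeg_smul_le c p) hp

lemma one_mem_SPolyLe (k : ℕ) : (1 : SPoly n) ∈ SPolyLe n k := by
  show sDeg (1 : SPoly n) ≤ k
  simp [sDeg_one]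

/-- Extension by zero of a linear functional on `𝒮_{k}` to `𝒮`
(used to refer to values of truncated functionals). -/
noncomputable def lext {n k : ℕ} (L : SPolyLe n k →ₗ[ℝ] ℝ) (p : SPoly n) : ℝ :=
  if h : sDeg p ≤ k then L ⟨p, h⟩ else 0

/-! ### Evaluations -/

section Eval

variable {A : Type*} [Ring A] [Module ℝ A]

/-- Evaluation of a word at a tuple `X`. -/
noncomputable def wEvalL (X : Fin n → A) (l : List (Fin n)) : A := (l.map X).prod

/-- The value assigned to the symbol `ς(w)`: `λ(w(X))`. -/
noncomputable def stVal (lam : A → ℝ) (X : Fin n → A) (q : SW n) : ℝ :=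
  lam (wEvalL X (Quotient.out q).1)

/-- Evaluation `a(λ; X) ∈ ℝ` of a state polynomial. -/
noncomputable def sEval (lam : A → ℝ) (X : Fin n → A) (p : SPoly n) : ℝ :=
  MvPolynomial.eval (stVal lam X) p

/-- Evaluation `f(λ; X) ∈ A` of an nc state polynomial. -/
noncomputable def ncEval (lam : A → ℝ) (X : Fin n → A) (f : NCSPoly n) : A :=
  Finsupp.sum f.coeff fun w c => sEval lam X c • wEvalL X (FreeMonoid.toList w)

end Eval

/-! ### States on matrix algebras -/

/-- A density matrix: positive semidefinite with trace 1. -/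
def IsDensity {k : ℕ} (ρ : Matrix (Fin k) (Fin k) ℝ) : Prop :=
  ρ.PosSemidef ∧ ρ.trace = 1

/-- The state on `k×k` matrices induced by a density matrix. -/
noncomputable def matState {k : ℕ} (ρ : Matrix (Fin k) (Fin k) ℝ) :
    Matrix (Fin k) (Fin k) ℝ → ℝ := fun Y => (ρ * Y).trace

/-- The vector state on `k×k` matrices induced by a vector `ψ`. -/
noncomputable def vecStateM {k : ℕ} (ψ : Fin k → ℝ) :
    Matrix (Fin k) (Fin k) ℝ → ℝ := fun Y => ψ ⬝ᵥ Y.mulVec ψ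

/-! ### States on B(H) -/

section Op

variable (H : Type*) [NormedAddCommGroup H] [InnerProductSpace ℝ H] [CompleteSpace H]

/-- A state on `B(H)`: a unital positive `⋆`-linear functional. -/
def IsState (lam : (H →L[ℝ] H) →ₗ[ℝ] ℝ) : Prop :=
  lam 1 = 1 ∧ (∀ Y : H →L[ℝ] H, lam (ContinuousLinearMap.adjoint Y) = lam Y) ∧
    ∀ Y : H →L[ℝ] H, 0 ≤ lam (Y * ContinuousLinearMap.adjoint Y)

/-- A vector state on `B(H)`. -/
def IsVecState (lam : (H →L[ℝ] H) →ₗ[ℝ] ℝ) : Prop :=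
  ∃ v : H, ‖v‖ = 1 ∧ ∀ Y : H →L[ℝ] H, lam Y = inner ℝ (Y v) v

/-- The state semialgebraic set `𝒟_C^∞` determined by the constraint set `C ⊆ 𝐒`. -/
def DCinf (C : Set (NCSPoly n)) :
    Set ((((H →L[ℝ] H) →ₗ[ℝ] ℝ)) × (Fin n → (H →L[ℝ] H))) :=
  {p | IsState H p.1 ∧ (∀ i, ContinuousLinearMap.adjoint (p.2 i) = p.2 i) ∧
    ∀ c ∈ C, (ncEval (⇑p.1) p.2 c).IsPositive}

/-- The subset `vec-𝒟_C^∞` of `𝒟_C^∞` in which the state is a vector state. -/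
def vecDCinf (C : Set (NCSPoly n)) :
    Set ((((H →L[ℝ] H) →ₗ[ℝ] ℝ)) × (Fin n → (H →L[ℝ] H))) :=
  {p ∈ DCinf H C | IsVecState H p.1}

end Op

/-! ### Positivity structures -/

/-- `Ω`: sums of products of elements `ς(h h⋆)`, `h ∈ 𝐒`. -/
def Omega (n : ℕ) : Set (SPoly n) :=
  {x | ∃ (m : ℕ) (g : Fin m → SPoly n),
    (∀ i, ∃ (mi : ℕ) (h : Fin mi → NCSPoly n), g i = ∏ j, sig (h j * ncStar (h j))) ∧
    x = ∑ i, g i}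

/-- Membership in the smallest subset of `𝒮` containing `{1} ∪ S` that is closed under
addition and under multiplication by squares of elements of `A`. -/
inductive QMemIn (A S : Set (SPoly n)) : SPoly n → Prop
  | base {s : SPoly n} : s ∈ insert (1 : SPoly n) S → QMemIn A S s
  | add {p q : SPoly n} : QMemIn A S p → QMemIn A S q → QMemIn A S (p + q)
  | mul_sq {a p : SPoly n} : a ∈ A → QMemIn A S p → QMemIn A S (a ^ 2 * p)

/-- The quadratic module generated by `S` in `𝒮`. -/
def QM (S : Set (SPoly n)) : Set (SPoly n) := {x | QMemIn Set.univ S x}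

/-- The set `C^ς = {ς(p c p⋆) : p ∈ ℝ⟨x⟩, c ∈ {1} ∪ C}`. -/
def Csig (C : Set (NCSPoly n)) : Set (SPoly n) :=
  {x | ∃ p : NCSPoly n, IsFreePoly p ∧ ∃ c ∈ insert (1 : NCSPoly n) C,
    x = sig (p * c * ncStar p)}

/-- A balanced constraint set: closed under `⋆`, and non-symmetric elements come in `±` pairs. -/
def Balanced (C : Set (NCSPoly n)) : Prop :=
  (∀ c ∈ C, ncStar c ∈ C) ∧ ∀ c ∈ C, c ≠ ncStar c → -c ∈ C

/-- An algebraically bounded constraint set: `N - x_1^2 - ⋯ - x_n^2 = ∑ p_i c_i p_i⋆` with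
`c_i ∈ {1} ∪ C ∩ ℝ⟨x⟩` and `p_i ∈ ℝ⟨x⟩`. -/
def AlgBounded (C : Set (NCSPoly n)) : Prop :=
  ∃ N : ℝ, 0 < N ∧ ∃ (m : ℕ) (p c : Fin m → NCSPoly n),
    (∀ i, IsFreePoly (p i)) ∧
    (∀ i, c i = 1 ∨ (c i ∈ C ∧ IsFreePoly (c i))) ∧
    ncConst N - ∑ j : Fin n, ncX j ^ 2 = ∑ i, p i * c i * ncStar (p i)

/-- The truncated quadratic module `M(C)_d`. -/
def MCd (C : Set (NCSPoly n)) (d : ℕ) : Set (SPoly n) :=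
  {x | ∃ (K : ℕ) (f c : Fin K → NCSPoly n),
    (∀ i, c i ∈ insert (1 : NCSPoly n) C) ∧
    (∀ i, ncDeg (f i * c i * ncStar (f i)) ≤ 2 * d) ∧
    x = ∑ i, sig (f i * c i * ncStar (f i))}

end StatePoly

namespace StatePoly

/-- Words of length at most `d` over `Fin n`, enumerated as pairs of a length `j ≤ d`
and a function `Fin j → Fin n` (so that the index type is a `Fintype`). -/
abbrev WordIdx (n d : ℕ) := (j : Fin (d + 1)) × (Fin (j : ℕ) → Fin n)

/-- The word corresponding to an index. -/
def wordOfIdx {n d : ℕ} (u : WordIdx n d) : List (Fin n) := List.ofFn u.2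

section Aux

variable {n k d : ℕ}

lemma wordOfIdx_length (u : WordIdx n d) : (wordOfIdx u).length = (u.1 : ℕ) := by
  simp [wordOfIdx]

lemma wordOfIdx_length_le (u : WordIdx n d) : (wordOfIdx u).length ≤ d := by
  rw [wordOfIdx_length]; exact Nat.lt_succ_iff.mp u.1.isLt

lemma wordOfIdx_injective : Function.Injective (wordOfIdx (n := n) (d := d)) := by
  rintro ⟨j, f⟩ ⟨j', f'⟩ h
  have hlen : (j : ℕ) = j' := by
    have := congrArg List.length h
    simpa [wordOfIdx] using this
  obtain rfl : j = j' := Fin.ext hlen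
  have : f = f' := List.ofFn_injective h
  subst this; rfl

/-- The index of a word of length at most `d`. -/
def idxOf (d : ℕ) (l : List (Fin n)) (h : l.length ≤ d) : WordIdx n d :=
  ⟨⟨l.length, Nat.lt_succ_of_le h⟩, fun i => l.get i⟩

lemma wordOfIdx_idxOf (l : List (Fin n)) (h : l.length ≤ d) :
    wordOfIdx (idxOf d l h) = l := by
  simp [wordOfIdx, idxOf, List.ofFn_get]

/-- The vacuum vector: indicator of the empty word. -/
noncomputable def psiW (W : Fin k → List (Fin n)) : Fin k → ℝ :=
  fun a => if W a = [] then 1 else 0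

/-- The symmetric matrix `X_i = S_i + S_iᵀ`, creation plus annihilation. -/
noncomputable def XW (W : Fin k → List (Fin n)) (i : Fin n) :
    Matrix (Fin k) (Fin k) ℝ :=
  Matrix.of fun a b =>
    (if W a = i :: W b then (1 : ℝ) else 0) + (if W b = i :: W a then 1 else 0)

lemma XW_isSymm (W : Fin k → List (Fin n)) (i : Fin n) : (XW W i).IsSymm := by
  ext a b
  simp only [XW, Matrix.transpose_apply, Matrix.of_apply]
  exact add_comm _ _

lemma wEvalL_nil {A : Type*} [Ring A] [Module ℝ A] (X : Fin n → A) :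
    wEvalL X ([] : List (Fin n)) = 1 := by
  simp [wEvalL]

lemma wEvalL_cons {A : Type*} [Ring A] [Module ℝ A] (X : Fin n → A) (i : Fin n)
    (l : List (Fin n)) : wEvalL X (i :: l) = X i * wEvalL X l := by
  simp [wEvalL]

lemma wEvalL_append {A : Type*} [Ring A] [Module ℝ A] (X : Fin n → A)
    (l₁ l₂ : List (Fin n)) : wEvalL X (l₁ ++ l₂) = wEvalL X l₁ * wEvalL X l₂ := by
  simp [wEvalL]

lemma wEvalL_transpose (X : Fin n → Matrix (Fin k) (Fin k) ℝ)
    (hX : ∀ i, (X i).IsSymm) (l : List (Fin n)) :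
    (wEvalL X l)ᵀ = wEvalL X l.reverse := by
  induction l with
  | nil => simp [wEvalL_nil]
  | cons i l ih =>
      rw [wEvalL_cons, Matrix.transpose_mul, ih, List.reverse_cons, wEvalL_append]
      congr 1
      rw [show wEvalL X [i] = X i by simp [wEvalL]]
      exact hX i

/-- mulVec of `XW W i` splits as creation plus annihilation. -/
lemma XW_mulVec (W : Fin k → List (Fin n)) (i : Fin n) (v : Fin k → ℝ) (a : Fin k) :
    (XW W i).mulVec v a =
      (∑ b, if W a = i :: W b then v b else 0) +
      (∑ b, if W b = i :: W a then v b else 0) := by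
  simp only [Matrix.mulVec, dotProduct, XW, Matrix.of_apply, add_mul,
    ite_mul, one_mul, zero_mul, Finset.sum_add_distrib]

/-- Key triangularity lemma: `w(X)` applied to the vacuum is the indicator of `w`, up to
lower-length terms. -/
lemma good_vec (W : Fin k → List (Fin n))
    (hinj : Function.Injective W)
    (hsurj : ∀ l : List (Fin n), l.length ≤ d → ∃ a, W a = l)
    (hlen : ∀ a, (W a).length ≤ d)
    (l : List (Fin n)) (hl : l.length ≤ d) (a : Fin k) :
    (W a = l → (wEvalL (XW W) l).mulVec (psiW W) a = 1) ∧
    (l.length ≤ (W a).length → W a ≠ l →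
      (wEvalL (XW W) l).mulVec (psiW W) a = 0) := by
  classical
  induction l generalizing a with
  | nil =>
      rw [wEvalL_nil, Matrix.one_mulVec]
      constructor
      · intro h; simp [psiW, h]
      · intro _ h; simp [psiW, h]
  | cons i l ih =>
      have hl' : l.length ≤ d := by
        have := hl; simp only [List.length_cons] at this; omega
      set v : Fin k → ℝ := (wEvalL (XW W) l).mulVec (psiW W) with hv
      have hval : (wEvalL (XW W) (i :: l)).mulVec (psiW W) a
          = (∑ b, if W a = i :: W b then v b else 0) +
            (∑ b, if W b = i :: W a then v b else 0) := by
        rw [wEvalL_cons, ← Matrix.mulVec_mulVec, XW_mulVec]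
      -- the annihilation sum (second term) always vanishes when `(W a).length ≥ l.length`
      have hterm2 : (l.length ≤ (W a).length) →
          (∑ b, if W b = i :: W a then v b else 0) = 0 := by
        intro hla
        apply Finset.sum_eq_zero
        intro b _
        by_cases hb : W b = i :: W a
        · rw [if_pos hb, (ih hl' b).2]
          · rw [hb]; simp only [List.length_cons]; omega
          · intro hc
            have := congrArg List.length hc
            rw [hb] at this
            simp only [List.length_cons] at this; omega
        · rw [if_neg hb]
      constructor
      · -- W a = i :: l
        intro ha
        obtain ⟨b₀, hb₀⟩ := hsurj l hl'
        have hterm1 : (∑ b, if W a = i :: W b then v b else 0) = 1 := by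
          rw [Finset.sum_eq_single b₀]
          · rw [if_pos (by rw [ha, hb₀]), (ih hl' b₀).1 hb₀]
          · intro b _ hb
            rw [if_neg]
            intro hc
            have h3 := ha.symm.trans hc
            injection h3 with _ h2
            exact hb (hinj (by rw [hb₀, h2]))
          · intro h; exact absurd (Finset.mem_univ b₀) h
        rw [hval, hterm1, hterm2 (by rw [ha]; simp only [List.length_cons]; omega)]
        ring
      · -- (W a).length ≥ l.length + 1 and W a ≠ i :: l
        intro hla hne
        have hla' : l.length ≤ (W a).length := by
          simp only [List.length_cons] at hla; omega
        have hterm1 : (∑ b, if W a = i :: W b then v b else 0) = 0 := by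
          apply Finset.sum_eq_zero
          intro b _
          by_cases hb : W a = i :: W b
          · rw [if_pos hb, (ih hl' b).2]
            · have h4 := congrArg List.length hb
              simp only [List.length_cons] at h4 hla
              omega
            · intro hc
              exact hne (by rw [hb, hc])
          · rw [if_neg hb]
        rw [hval, hterm1, hterm2 hla']
        ring
end Aux

/-- Lemma `l:pd`.
For every `d` there exist `k`, a unit vector `ψ ∈ ℝ^k` and a tuple `X` of `k×k` real
symmetric matrices such that the evaluation of the formal Hankel matrix
`H_d = (ς(u w⋆))_{u,w ∈ ⟨x⟩_d}` at the vector state `λ(Y) = ⟨Yψ, ψ⟩` and the tuple `X`,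
i.e. the matrix with `(u,w)`-entry `⟨u(X)·w(X)ᵀ ψ, ψ⟩`, is positive definite. -/
theorem statement_3 (n : ℕ) (hn : 1 ≤ n) (d : ℕ) :
    ∃ (k : ℕ) (ψ : Fin k → ℝ) (X : Fin n → Matrix (Fin k) (Fin k) ℝ),
      ψ ⬝ᵥ ψ = 1 ∧ (∀ i, (X i).IsSymm) ∧
      Matrix.PosDef (Matrix.of fun (u w : WordIdx n d) =>
        ψ ⬝ᵥ (wEvalL X (wordOfIdx u) * (wEvalL X (wordOfIdx w))ᵀ).mulVec ψ) := by
  classical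
  set ι := WordIdx n d
  set k := Fintype.card ι with hk
  set e : ι ≃ Fin k := Fintype.equivFin ι with he
  set W : Fin k → List (Fin n) := fun a => wordOfIdx (e.symm a) with hW
  have hinj : Function.Injective W := fun a b h =>
    e.symm.injective (wordOfIdx_injective h)
  have hsurj : ∀ l : List (Fin n), l.length ≤ d → ∃ a, W a = l := by
    intro l h
    exact ⟨e (idxOf d l h), by simp [hW, wordOfIdx_idxOf]⟩
  have hlen : ∀ a, (W a).length ≤ d := fun a => wordOfIdx_length_le _
  set ψ : Fin k → ℝ := psiW W with hψ
  set X : Fin n → Matrix (Fin k) (Fin k) ℝ := XW W with hX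
  have hXsymm : ∀ i, (X i).IsSymm := fun i => XW_isSymm W i
  refine ⟨k, ψ, X, ?_, hXsymm, ?_⟩
  · -- ψ is a unit vector
    obtain ⟨a₀, ha₀⟩ := hsurj [] (Nat.zero_le d)
    have hψval : ∀ a, ψ a * ψ a = if a = a₀ then 1 else 0 := by
      intro a
      by_cases h : a = a₀
      · subst h; simp [hψ, psiW, ha₀]
      · have hne : W a ≠ [] := fun hc => h (hinj (hc.trans ha₀.symm))
        simp [hψ, psiW, hne, h]
    show (∑ a, ψ a * ψ a) = 1
    rw [Finset.sum_congr rfl fun a _ => hψval a, Finset.sum_ite_eq' Finset.univ a₀ fun _ => (1 : ℝ),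
      if_pos (Finset.mem_univ a₀)]
  · -- positive definiteness
    set V : ι → Fin k → ℝ :=
      fun u => (wEvalL X (wordOfIdx u).reverse).mulVec ψ with hV
    have hentry : ∀ u w : ι,
        ψ ⬝ᵥ (wEvalL X (wordOfIdx u) * (wEvalL X (wordOfIdx w))ᵀ).mulVec ψ
          = V u ⬝ᵥ V w := by
      intro u w
      rw [← Matrix.mulVec_mulVec, Matrix.dotProduct_mulVec,
        ← Matrix.mulVec_transpose, wEvalL_transpose X hXsymm,
        wEvalL_transpose X hXsymm]
    have hgood : ∀ (u : ι) (a : Fin k),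
        (W a = (wordOfIdx u).reverse → V u a = 1) ∧
        ((wordOfIdx u).reverse.length ≤ (W a).length →
          W a ≠ (wordOfIdx u).reverse → V u a = 0) :=
      fun u a => good_vec W hinj hsurj hlen (wordOfIdx u).reverse
        (by rw [List.length_reverse]; exact wordOfIdx_length_le u) a
    rw [Matrix.posDef_iff_dotProduct_mulVec]
    constructor
    · -- Hermitian
      ext u w
      simp only [Matrix.conjTranspose_apply, Matrix.of_apply, star_trivial]
      rw [hentry, hentry, dotProduct_comm]
    · -- positivity
      intro x hx
      set y : Fin k → ℝ := fun a => ∑ u : ι, x u * V u a with hy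
      have hM : (Matrix.of fun (u w : ι) =>
          ψ ⬝ᵥ (wEvalL X (wordOfIdx u) * (wEvalL X (wordOfIdx w))ᵀ).mulVec ψ)
          = Matrix.of fun (u w : ι) => V u ⬝ᵥ V w := by
        ext u w
        exact hentry u w
      have hyy : ∀ a, y a * y a = ∑ u : ι, ∑ w : ι, x u * V u a * (x w * V w a) := by
        intro a
        show (∑ u : ι, x u * V u a) * (∑ w : ι, x w * V w a) = _
        rw [Finset.sum_mul_sum]
      have hquad : star x ⬝ᵥ (Matrix.of fun (u w : ι) =>
          ψ ⬝ᵥ (wEvalL X (wordOfIdx u) * (wEvalL X (wordOfIdx w))ᵀ).mulVec ψ).mulVec x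
          = ∑ a, y a * y a := by
        rw [hM]
        have hLHS : star x ⬝ᵥ (Matrix.of fun (u w : ι) => V u ⬝ᵥ V w).mulVec x
            = ∑ u : ι, ∑ w : ι, ∑ a, x u * V u a * (x w * V w a) := by
          simp only [dotProduct, Matrix.mulVec, Matrix.of_apply, star_trivial,
            Pi.star_apply, Finset.mul_sum, Finset.sum_mul]
          refine Finset.sum_congr rfl fun u _ => Finset.sum_congr rfl fun w _ =>
            Finset.sum_congr rfl fun a _ => by ring
        rw [hLHS]
        calc ∑ u : ι, ∑ w : ι, ∑ a, x u * V u a * (x w * V w a)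
            = ∑ u : ι, ∑ a, ∑ w : ι, x u * V u a * (x w * V w a) :=
              Finset.sum_congr rfl fun u _ => Finset.sum_comm
          _ = ∑ a, ∑ u : ι, ∑ w : ι, x u * V u a * (x w * V w a) := Finset.sum_comm
          _ = ∑ a, y a * y a := Finset.sum_congr rfl fun a _ => (hyy a).symm
      rw [hquad]
      -- choose u₀ in the support of x with maximal word length
      have hne : (Finset.univ.filter fun u : ι => x u ≠ 0).Nonempty := by
        obtain ⟨u, hu⟩ := Function.ne_iff.mp hx
        exact ⟨u, Finset.mem_filter.mpr ⟨Finset.mem_univ u, hu⟩⟩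
      obtain ⟨u₀, hu₀mem, hu₀max⟩ :=
        Finset.exists_max_image _ (fun u : ι => (wordOfIdx u).length) hne
      have hxu₀ : x u₀ ≠ 0 := (Finset.mem_filter.mp hu₀mem).2
      have hmax : ∀ u : ι, x u ≠ 0 → (wordOfIdx u).length ≤ (wordOfIdx u₀).length :=
        fun u hu => hu₀max u (Finset.mem_filter.mpr ⟨Finset.mem_univ u, hu⟩)
      obtain ⟨a₀, ha₀⟩ := hsurj (wordOfIdx u₀).reverse
        (by rw [List.length_reverse]; exact wordOfIdx_length_le u₀)
      have hya₀ : y a₀ = x u₀ := by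
        show (∑ u : ι, x u * V u a₀) = x u₀
        rw [Finset.sum_eq_single u₀]
        · rw [(hgood u₀ a₀).1 ha₀, mul_one]
        · intro u _ hu
          by_cases hxu : x u = 0
          · rw [hxu, zero_mul]
          · rw [(hgood u a₀).2, mul_zero]
            · rw [List.length_reverse, ha₀, List.length_reverse]
              exact hmax u hxu
            · rw [ha₀]
              intro hc
              exact hu (wordOfIdx_injective (List.reverse_injective hc.symm))
        · intro h; exact absurd (Finset.mem_univ u₀) h
      apply Finset.sum_pos' (fun a _ => mul_self_nonneg (y a))
      exact ⟨a₀, Finset.mem_univ a₀, mul_self_pos.mpr (hya₀ ▸ hxu₀)⟩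

end StatePoly
end

section
/- Let H_d = (ς(u w⋆))_{u,w ∈ ⟨x⟩_d} be the matrix over 𝒮 indexed by words of length at most d. Every principal minor m of H_d is a quotient of two elements of Ω: there exist p, q ∈ Ω with q ≠ 0 and q·m = p in 𝒮. -/
open scoped BigOperators Matrix Kronecker

namespace StatePolyAux

variable {n : ℕ}

/-- The Fock-like space: finitely supported functions on words. -/
abbrev FockV (n : ℕ) := List (Fin n) →₀ ℝ

/-- The standard bilinear pairing. -/
noncomputable def fockB : FockV n →ₗ[ℝ] FockV n →ₗ[ℝ] ℝ :=
  Finsupp.lsum ℝ fun a => LinearMap.toSpanSingleton ℝ (FockV n →ₗ[ℝ] ℝ) (Finsupp.lapply a)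

lemma fockB_single (v : List (Fin n)) (c : ℝ) (g : FockV n) :
    fockB (Finsupp.single v c) g = c * g v := by
  simp [fockB, LinearMap.toSpanSingleton_apply]

lemma fockB_apply (f g : FockV n) :
    fockB f g = f.sum fun a c => c * g a := by
  classical
  induction f using Finsupp.induction_linear with
  | zero => simp
  | add p q hp hq =>
      rw [map_add, LinearMap.add_apply, hp, hq,
        Finsupp.sum_add_index (by simp) (by intros; ring)]
  | single a b =>
      rw [fockB_single, Finsupp.sum_single_index (by simp)]

lemma fockB_single_right (f : FockV n) (w : List (Fin n)) (c : ℝ) :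
    fockB f (Finsupp.single w c) = f w * c := by
  classical
  rw [fockB_apply]
  rw [Finsupp.sum]
  rw [Finset.sum_eq_single w (fun b _ hb => by
    simp [Finsupp.single_apply, Ne.symm hb]) (fun hw => by
    simp [Finsupp.notMem_support_iff.mp hw])]
  simp

lemma fockB_pos {f : FockV n} (hf : f ≠ 0) : 0 < fockB f f := by
  classical
  rw [fockB_apply, Finsupp.sum]
  apply Finset.sum_pos' (fun a _ => mul_self_nonneg _)
  obtain ⟨a, ha⟩ := Finsupp.support_nonempty_iff.mpr hf
  refine ⟨a, ha, mul_pos_iff.mpr ?_⟩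
  rcases (Finsupp.mem_support_iff.mp ha).lt_or_gt with h | h
  · exact Or.inr ⟨h, h⟩
  · exact Or.inl ⟨h, h⟩

/-- Creation plus annihilation operator for letter `i`. -/
noncomputable def fockT (i : Fin n) : FockV n →ₗ[ℝ] FockV n :=
  Finsupp.lsum ℝ fun v => LinearMap.toSpanSingleton ℝ (FockV n)
    (Finsupp.single (v ++ [i]) 1 +
      if v.getLast? = some i then Finsupp.single v.dropLast 1 else 0)

lemma fockT_single (i : Fin n) (v : List (Fin n)) (c : ℝ) :
    fockT i (Finsupp.single v c) = c • (Finsupp.single (v ++ [i]) 1 +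
      if v.getLast? = some i then Finsupp.single v.dropLast 1 else 0) := by
  simp [fockT, LinearMap.toSpanSingleton_apply]

lemma ann_coeff (i : Fin n) (v w : List (Fin n)) :
    (if v.getLast? = some i then Finsupp.single v.dropLast (1:ℝ) else 0) w
      = if v = w ++ [i] then 1 else 0 := by
  classical
  by_cases h2 : v = w ++ [i]
  · subst h2
    rw [if_pos List.getLast?_concat, if_pos rfl, List.dropLast_concat,
      Finsupp.single_eq_same]
  · rw [if_neg h2]
    split_ifs with h1
    · rw [Finsupp.single_apply, if_neg]
      intro h3
      apply h2
      have hv : v ≠ [] := by rintro rfl; simp at h1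
      have h4 := List.dropLast_concat_getLast hv
      rw [h3] at h4
      rw [List.getLast?_eq_getLast hv] at h1
      rw [← h4, Option.some.inj h1]
    · rfl

lemma fockT_single_apply (i : Fin n) (v w : List (Fin n)) (c : ℝ) :
    (fockT i (Finsupp.single v c)) w
      = c * ((if v ++ [i] = w then 1 else 0) + (if v = w ++ [i] then 1 else 0)) := by
  classical
  rw [fockT_single, Finsupp.smul_apply, Finsupp.add_apply, ann_coeff, Finsupp.single_apply,
    smul_eq_mul]

lemma fockT_adj (i : Fin n) (f g : FockV n) :
    fockB (fockT i f) g = fockB f (fockT i g) := by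
  classical
  induction f using Finsupp.induction_linear with
  | zero => simp
  | add p q hp hq => simp [map_add, hp, hq]
  | single v c =>
    induction g using Finsupp.induction_linear with
    | zero => simp
    | add p q hp hq => simp [map_add, hp, hq]
    | single w c' =>
      rw [fockB_single_right, fockB_single, fockT_single_apply, fockT_single_apply]
      rw [show ((if w ++ [i] = v then (1:ℝ) else 0) + if w = v ++ [i] then 1 else 0)
          = ((if v ++ [i] = w then (1:ℝ) else 0) + if v = w ++ [i] then 1 else 0) by
        rw [add_comm]
        congr 1 <;> simp [eq_comm]]
      ring

/-- Product of operators along a word. -/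
noncomputable def fockProd (l : List (Fin n)) : FockV n →ₗ[ℝ] FockV n :=
  (l.map fockT).prod

@[simp] lemma fockProd_nil (x : FockV n) : fockProd [] x = x := rfl

lemma fockProd_cons (i : Fin n) (l : List (Fin n)) (x : FockV n) :
    fockProd (i :: l) x = fockT i (fockProd l x) := by
  rw [fockProd, List.map_cons, List.prod_cons]; rfl

lemma fockProd_append (l₁ l₂ : List (Fin n)) (x : FockV n) :
    fockProd (l₁ ++ l₂) x = fockProd l₁ (fockProd l₂ x) := by
  rw [fockProd, List.map_append, List.prod_append]; rfl

lemma fockProd_adj (l : List (Fin n)) (f g : FockV n) :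
    fockB (fockProd l f) g = fockB f (fockProd l.reverse g) := by
  induction l generalizing g with
  | nil => simp
  | cons i t ih =>
      rw [fockProd_cons, fockT_adj, ih, List.reverse_cons, fockProd_append]
      rfl

/-- The vacuum vector. -/
noncomputable def fockDelta : FockV n := Finsupp.single [] 1

lemma fockT_supp {i : Fin n} {f : FockV n} {w : List (Fin n)}
    (hw : w ∈ (fockT i f).support) : ∃ v ∈ f.support, w.length ≤ v.length + 1 := by
  classical
  by_contra hcon
  push_neg at hcon
  have : (fockT i f) w = 0 := by
    have hrepr : fockT i f = f.sum fun v c => c • (Finsupp.single (v ++ [i]) (1:ℝ) +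
        if v.getLast? = some i then Finsupp.single v.dropLast 1 else 0) := by
      rw [fockT]
      rw [Finsupp.lsum_apply]
      rfl
    rw [hrepr, Finsupp.sum_apply, Finsupp.sum]
    apply Finset.sum_eq_zero
    intro v hv
    have hlen := hcon v hv
    have h1 : v ++ [i] ≠ w := by
      intro h; have := congrArg List.length h; simp at this; omega
    have h2 : v ≠ w ++ [i] := by
      intro h; have := congrArg List.length h; simp at this; omega
    rw [Finsupp.smul_apply, Finsupp.add_apply, ann_coeff, Finsupp.single_apply,
      if_neg h1, if_neg h2, add_zero, smul_zero]
  exact Finsupp.mem_support_iff.mp hw this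

lemma fockE_struct (l : List (Fin n)) :
    ∃ r : FockV n, fockProd l fockDelta = Finsupp.single l.reverse 1 + r ∧
      ∀ w ∈ r.support, w.length < l.length := by
  classical
  induction l with
  | nil => exact ⟨0, by simp [fockDelta], by simp⟩
  | cons i t ih =>
      obtain ⟨r, hr, hlen⟩ := ih
      refine ⟨(if t.reverse.getLast? = some i then Finsupp.single t.reverse.dropLast 1 else 0)
        + fockT i r, ?_, ?_⟩
      · rw [fockProd_cons, hr, map_add, fockT_single, one_smul, List.reverse_cons, ← add_assoc]
      · intro w hw
        rcases Finset.mem_union.mp (Finsupp.support_add hw) with h | h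
        · split_ifs at h with hc
          · rw [Finsupp.support_single_ne_zero _ one_ne_zero] at h
            rw [Finset.mem_singleton.mp h]
            simp only [List.length_dropLast, List.length_reverse, List.length_cons]
            omega
          · simp at h
        · obtain ⟨v, hv, hle⟩ := fockT_supp h
          have := hlen v hv
          simp only [List.length_cons]
          omega

/-- The moment functional. -/
noncomputable def fockL (v : List (Fin n)) : ℝ := fockB (fockProd v fockDelta) fockDelta

lemma fockL_eq (v : List (Fin n)) : fockL v = (fockProd v fockDelta) [] := by
  rw [fockL, fockDelta, fockB_single_right, mul_one]

lemma fockL_reverse (v : List (Fin n)) : fockL v.reverse = fockL v := by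
  rw [fockL, fockProd_adj, List.reverse_reverse, fockL_eq, fockDelta, fockB_single, one_mul]

lemma fockL_gram (a b : List (Fin n)) :
    fockL (a ++ b.reverse) =
      fockB (fockProd b.reverse fockDelta) (fockProd a.reverse fockDelta) := by
  rw [fockL, fockProd_append, fockProd_adj]

lemma fock_indep {k : ℕ} (w : Fin k → List (Fin n)) (hw : Function.Injective w)
    (x : Fin k → ℝ) (hx : x ≠ 0) :
    (∑ a, x a • fockProd (w a).reverse fockDelta) ≠ 0 := by
  classical
  intro hS
  set F := Finset.univ.filter (fun a => x a ≠ 0) with hF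
  have hFne : F.Nonempty := by
    rcases Function.ne_iff.mp hx with ⟨a, ha⟩
    have ha' : x a ≠ 0 := by simpa using ha
    exact ⟨a, by simp [hF, ha']⟩
  obtain ⟨a0, ha0F, hmax⟩ := F.exists_max_image (fun a => (w a).length) hFne
  have hx0 : x a0 ≠ 0 := (Finset.mem_filter.mp ha0F).2
  have hcoef : (∑ a, x a • fockProd (w a).reverse fockDelta) (w a0) = x a0 := by
    rw [Finset.sum_apply']
    rw [Finset.sum_eq_single a0]
    · obtain ⟨r, hr, hlen⟩ := fockE_struct (w a0).reverse
      rw [Finsupp.smul_apply, hr, List.reverse_reverse, Finsupp.add_apply,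
        Finsupp.single_eq_same]
      have : r (w a0) = 0 := by
        by_contra hne
        have := hlen _ (Finsupp.mem_support_iff.mpr hne)
        simp at this
      rw [this, add_zero, smul_eq_mul, mul_one]
    · intro a _ hne
      by_cases hxa : x a = 0
      · rw [hxa, zero_smul, Finsupp.coe_zero, Pi.zero_apply]
      · obtain ⟨r, hr, hlen⟩ := fockE_struct (w a).reverse
        have hmaxa := hmax a (by simp [hF, hxa])
        rw [Finsupp.smul_apply, hr, List.reverse_reverse, Finsupp.add_apply,
          Finsupp.single_apply, if_neg (fun h => hne (hw h))]
        have : r (w a0) = 0 := by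
          by_contra hne'
          have := hlen _ (Finsupp.mem_support_iff.mpr hne')
          simp only [List.length_reverse] at this
          omega
        rw [this, add_zero, smul_zero]
    · intro h
      exact absurd (Finset.mem_univ a0) h
  rw [hS] at hcoef
  exact hx0 (by simpa using hcoef.symm)

lemma fock_gram_posdef {k : ℕ} (w : Fin k → List (Fin n)) (hw : Function.Injective w) :
    (Matrix.of fun a b => fockL (w a ++ (w b).reverse)).PosDef := by
  classical
  refine Matrix.PosDef.of_dotProduct_mulVec_pos ?_ ?_
  · show Matrix.conjTranspose _ = _
    ext a b
    simp only [Matrix.conjTranspose_apply, Matrix.of_apply, star_trivial]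
    rw [← fockL_reverse]
    congr 1
    simp
  · intro x hx
    set ψ : Fin k → FockV n := fun c => fockProd (w c).reverse fockDelta with hψ
    set S : FockV n := ∑ a, x a • ψ a with hSdef
    have h1 : fockB S S = ∑ b, x b * fockB (ψ b) S := by
      have hB : fockB S = ∑ b, x b • fockB (ψ b) := by
        rw [hSdef, map_sum]
        exact Finset.sum_congr rfl fun b _ => by rw [map_smul]
      rw [hB, LinearMap.sum_apply]
      exact Finset.sum_congr rfl fun b _ => by rw [LinearMap.smul_apply, smul_eq_mul]
    have h2 : ∀ b, fockB (ψ b) S = ∑ a, x a * fockB (ψ b) (ψ a) := fun b => by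
      rw [hSdef, map_sum]
      refine Finset.sum_congr rfl fun a _ => ?_
      rw [map_smul, smul_eq_mul]
    have hdot : dotProduct (star x)
        ((Matrix.of fun a b => fockL (w a ++ (w b).reverse)) *ᵥ x) = fockB S S := by
      rw [star_trivial, h1]
      simp only [h2, Finset.mul_sum]
      rw [Finset.sum_comm]
      refine Finset.sum_congr rfl fun a _ => ?_
      rw [show ((Matrix.of fun a b => fockL (w a ++ (w b).reverse)) *ᵥ x) a
          = ∑ b, fockL (w a ++ (w b).reverse) * x b from rfl, Finset.mul_sum]
      refine Finset.sum_congr rfl fun b _ => ?_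
      rw [fockL_gram]
      ring
    rw [hdot]
    exact fockB_pos (fock_indep w hw x hx)

end StatePolyAux

namespace StatePoly

variable {n : ℕ}

lemma sig_zero : sig (0 : NCSPoly n) = 0 := by unfold sig; exact Finsupp.sum_zero_index

lemma sig_add (f g : NCSPoly n) : sig (f + g) = sig f + sig g := by
  unfold sig; rw [MonoidAlgebra.coeff_add]; exact Finsupp.sum_add_index' (by intro a; exact zero_mul _) (by intro a b₁ b₂; exact add_mul _ _ _)

lemma sig_single (w : Word n) (c : SPoly n) :
    sig (MonoidAlgebra.single w c) = c * sigWordL (FreeMonoid.toList w) := by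
  unfold sig; rw [MonoidAlgebra.coeff_single]; exact Finsupp.sum_single_index (zero_mul _)

lemma sig_sum {ι : Type*} (s : Finset ι) (f : ι → NCSPoly n) :
    sig (∑ i ∈ s, f i) = ∑ i ∈ s, sig (f i) := by
  classical
  induction s using Finset.induction with
  | empty => simp [sig_zero]
  | insert _ _ hx ih => rw [Finset.sum_insert hx, Finset.sum_insert hx, sig_add, ih]

lemma ncStar_single (w : Word n) (c : SPoly n) :
    ncStar (MonoidAlgebra.single w c) = MonoidAlgebra.single (wordRev w) c := by
  unfold ncStar; rw [MonoidAlgebra.coeff_single, Finsupp.mapDomain_single]; rfl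

lemma ncStar_sum {ι : Type*} (s : Finset ι) (f : ι → NCSPoly n) :
    ncStar (∑ i ∈ s, f i) = ∑ i ∈ s, ncStar (f i) := by
  classical
  induction s using Finset.induction with
  | empty => simp [ncStar]
  | insert _ _ hx ih =>
      rw [Finset.sum_insert hx, Finset.sum_insert hx, ← ih, ncStar, ncStar,
        MonoidAlgebra.coeff_add, Finsupp.mapDomain_add]
      rfl

lemma sigWordL_nil : sigWordL ([] : List (Fin n)) = 1 := by rw [sigWordL, dif_pos rfl]

lemma sig_iotaS_sq (s : SPoly n) : sig (iotaS s * ncStar (iotaS s)) = s * s := by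
  rw [iotaS, ncStar_single, show wordRev (1 : Word n) = 1 from rfl,
    MonoidAlgebra.single_mul_single, one_mul, sig_single,
    show FreeMonoid.toList (1 : Word n) = [] from rfl, sigWordL_nil, mul_one]

lemma sq_mem_omega (s : SPoly n) : s * s ∈ Omega n :=
  ⟨1, fun _ => s * s, fun _ => ⟨1, fun _ => iotaS s, by
    rw [Fin.prod_univ_one, sig_iotaS_sq]⟩, by rw [Fin.sum_univ_one]⟩

lemma prod_mem_omega {k : ℕ} (h : Fin k → NCSPoly n) :
    (∏ j, sig (h j * ncStar (h j))) ∈ Omega n :=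
  ⟨1, fun _ => ∏ j, sig (h j * ncStar (h j)), fun _ => ⟨k, h, rfl⟩, by
    rw [Fin.sum_univ_one]⟩

lemma sig_gram {k : ℕ} (w : Fin k → List (Fin n)) (c : Fin k → SPoly n) :
    sig ((∑ a, MonoidAlgebra.single (FreeMonoid.ofList (w a)) (c a)) *
      ncStar (∑ a, MonoidAlgebra.single (FreeMonoid.ofList (w a)) (c a)))
    = ∑ a, ∑ b, c a * sigWordL (w a ++ (w b).reverse) * c b := by
  classical
  rw [ncStar_sum]
  simp_rw [ncStar_single]
  rw [Finset.sum_mul_sum]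
  simp_rw [MonoidAlgebra.single_mul_single]
  rw [sig_sum]
  refine Finset.sum_congr rfl fun a _ => ?_
  rw [sig_sum]
  refine Finset.sum_congr rfl fun b _ => ?_
  rw [sig_single,
    show FreeMonoid.toList (FreeMonoid.ofList (w a) * wordRev (FreeMonoid.ofList (w b)))
      = w a ++ (w b).reverse from rfl]
  ring

lemma adj_qf {R : Type*} [CommRing R] (m : ℕ) (A : Matrix (Fin (m+1)) (Fin (m+1)) R) :
    ∑ a, ∑ b, Matrix.adjugate A a (Fin.last m) * A a b * Matrix.adjugate A b (Fin.last m)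
      = (A.submatrix Fin.castSucc Fin.castSucc).det * A.det := by
  classical
  have hrow : ∀ a, ∑ b, A a b * Matrix.adjugate A b (Fin.last m)
      = A.det * (if a = Fin.last m then 1 else 0) := by
    intro a
    calc ∑ b, A a b * Matrix.adjugate A b (Fin.last m)
        = (A * Matrix.adjugate A) a (Fin.last m) := (Matrix.mul_apply).symm
      _ = (A.det • (1 : Matrix (Fin (m+1)) (Fin (m+1)) R)) a (Fin.last m) := by
          rw [Matrix.mul_adjugate]
      _ = A.det * (if a = Fin.last m then 1 else 0) := by
          rw [Matrix.smul_apply, Matrix.one_apply, smul_eq_mul]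
  calc ∑ a, ∑ b, Matrix.adjugate A a (Fin.last m) * A a b * Matrix.adjugate A b (Fin.last m)
      = ∑ a, Matrix.adjugate A a (Fin.last m)
          * (∑ b, A a b * Matrix.adjugate A b (Fin.last m)) := by
        refine Finset.sum_congr rfl fun a _ => ?_
        rw [Finset.mul_sum]
        exact Finset.sum_congr rfl fun b _ => by ring
    _ = ∑ a, Matrix.adjugate A a (Fin.last m) * (A.det * (if a = Fin.last m then 1 else 0)) := by
        exact Finset.sum_congr rfl fun a _ => by rw [hrow a]
    _ = Matrix.adjugate A (Fin.last m) (Fin.last m) * A.det := by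
        rw [Finset.sum_eq_single (Fin.last m)]
        · rw [if_pos rfl, mul_one]
        · intro b _ hb
          rw [if_neg hb, mul_zero, mul_zero]
        · intro h; exact absurd (Finset.mem_univ _) h
    _ = (A.submatrix Fin.castSucc Fin.castSucc).det * A.det := by
        rw [Matrix.adjugate_fin_succ_eq_det_submatrix, Fin.succAbove_last, Fin.val_last,
          Even.neg_one_pow ⟨m, rfl⟩, one_mul]

/-- The moment evaluation point. -/
noncomputable def thetaF : SW n → ℝ :=
  Quotient.lift (fun s : {l : List (Fin n) // l ≠ []} => StatePolyAux.fockL s.1)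
    (by
      rintro ⟨a, _⟩ ⟨b, _⟩ (h | h) <;> simp only at h <;> subst h
      · rfl
      · exact StatePolyAux.fockL_reverse b)

lemma eval_sigWordL (l : List (Fin n)) :
    MvPolynomial.eval (thetaF (n := n)) (sigWordL l) = StatePolyAux.fockL l := by
  rw [sigWordL]
  split_ifs with h
  · subst h
    rw [map_one, StatePolyAux.fockL_eq]
    simp [StatePolyAux.fockDelta]
  · exact MvPolynomial.eval_X (f := thetaF (n := n)) _

end StatePoly

namespace StatePoly

/-- Proposition `p:psdhank`.
Every principal minor `m` of the Hankel matrix `H_d = (ς(u w⋆))_{u,w ∈ ⟨x⟩_d}` (rows and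
columns indexed by a subset `I` of the words of length at most `d`) is a quotient of two
elements of `Ω`: there are `p, q ∈ Ω` with `q ≠ 0` and `q·m = p` in `𝒮`. -/
theorem statement_4 (n d : ℕ) (hn : 1 ≤ n) (I : Finset (List (Fin n)))
    (hI : ∀ u ∈ I, u.length ≤ d) :
    ∃ p ∈ Omega n, ∃ q ∈ Omega n, q ≠ 0 ∧
      q * Matrix.det (Matrix.of fun (u w : I) => sigWordL (u.1 ++ w.1.reverse)) = p := by
  classical
  set k := I.card with hk
  set e : Fin k ≃ {x // x ∈ I} := I.equivFin.symm with he
  set u : Fin k → List (Fin n) := fun a => (e a).1 with hu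
  have huinj : Function.Injective u := fun a b h => e.injective (Subtype.ext h)
  set M : Matrix (Fin k) (Fin k) (SPoly n) :=
    Matrix.of (fun a b => sigWordL (u a ++ (u b).reverse)) with hM
  have hdet : Matrix.det (Matrix.of fun (u w : I) => sigWordL (u.1 ++ w.1.reverse)) = M.det := by
    rw [← Matrix.det_submatrix_equiv_self e]
    rfl
  set D : ℕ → SPoly n := fun m =>
    if hm : m ≤ k then (M.submatrix (Fin.castLE hm) (Fin.castLE hm)).det else 0 with hD
  have hblock : ∀ (m : ℕ) (hm : m ≤ k),
      (M.submatrix (Fin.castLE hm) (Fin.castLE hm)).map (MvPolynomial.eval (thetaF (n := n)))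
      = Matrix.of fun a b : Fin m =>
          StatePolyAux.fockL (u (Fin.castLE hm a) ++ (u (Fin.castLE hm b)).reverse) := by
    intro m hm
    ext a b
    rw [Matrix.map_apply, Matrix.submatrix_apply]
    exact eval_sigWordL _
  have hDpos : ∀ (m : ℕ), m ≤ k → 0 < MvPolynomial.eval (thetaF (n := n)) (D m) := by
    intro m hm
    rw [hD]
    simp only [dif_pos hm]
    rw [RingHom.map_det, RingHom.mapMatrix_apply, hblock m hm]
    exact (StatePolyAux.fock_gram_posdef _ (huinj.comp (Fin.castLE_injective hm))).det_pos
  have hD0 : D 0 = 1 := by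
    rw [hD]
    simp only [dif_pos (Nat.zero_le k)]
    simp
  have hDk : D k = M.det := by
    rw [hD]
    simp only [dif_pos (le_refl k)]
    congr 1
  -- the nc state polynomials giving the quadratic forms
  set hvec : ℕ → NCSPoly n := fun m =>
    if hm1 : m + 1 ≤ k then
      ∑ a : Fin (m+1), MonoidAlgebra.single (FreeMonoid.ofList (u (Fin.castLE hm1 a)))
        (Matrix.adjugate (M.submatrix (Fin.castLE hm1) (Fin.castLE hm1)) a (Fin.last m))
    else 0 with hhvec
  have key : ∀ m : ℕ, m < k → sig (hvec m * ncStar (hvec m)) = D m * D (m+1) := by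
    intro m hm
    have hm1 : m + 1 ≤ k := hm
    have hm' : m ≤ k := le_of_lt hm
    rw [hhvec]
    simp only [dif_pos hm1]
    rw [sig_gram (fun a : Fin (m+1) => u (Fin.castLE hm1 a))
      (fun a : Fin (m+1) => Matrix.adjugate (M.submatrix (Fin.castLE hm1) (Fin.castLE hm1)) a
        (Fin.last m))]
    have := adj_qf m (M.submatrix (Fin.castLE hm1) (Fin.castLE hm1))
    rw [show ∑ a, ∑ b,
        Matrix.adjugate (M.submatrix (Fin.castLE hm1) (Fin.castLE hm1)) a (Fin.last m) *
          sigWordL (u (Fin.castLE hm1 a) ++ (u (Fin.castLE hm1 b)).reverse) *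
          Matrix.adjugate (M.submatrix (Fin.castLE hm1) (Fin.castLE hm1)) b (Fin.last m)
      = ∑ a, ∑ b,
        Matrix.adjugate (M.submatrix (Fin.castLE hm1) (Fin.castLE hm1)) a (Fin.last m) *
          (M.submatrix (Fin.castLE hm1) (Fin.castLE hm1)) a b *
          Matrix.adjugate (M.submatrix (Fin.castLE hm1) (Fin.castLE hm1)) b (Fin.last m)
      from rfl, this]
    have hsub : (M.submatrix (Fin.castLE hm1) (Fin.castLE hm1)).submatrix
        Fin.castSucc Fin.castSucc = M.submatrix (Fin.castLE hm') (Fin.castLE hm') := by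
      ext a b
      simp only [Matrix.submatrix_apply]
      congr 1 <;> exact Fin.ext rfl
    rw [hsub, hD]
    simp only [dif_pos hm', dif_pos hm1]
  set P : SPoly n := ∏ m ∈ Finset.range k, D m with hP
  refine ⟨∏ m ∈ Finset.range k, sig (hvec m * ncStar (hvec m)), ?_, P * P, sq_mem_omega P,
    ?_, ?_⟩
  · have : ∏ m ∈ Finset.range k, sig (hvec m * ncStar (hvec m))
        = ∏ j : Fin k, sig ((fun j : Fin k => hvec j.1) j *
            ncStar ((fun j : Fin k => hvec j.1) j)) := by
      rw [Fin.prod_univ_eq_prod_range (fun m => sig (hvec m * ncStar (hvec m))) k]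
    rw [this]
    exact prod_mem_omega _
  · intro hq
    have hpos : 0 < MvPolynomial.eval (thetaF (n := n)) (P * P) := by
      rw [map_mul]
      have : 0 < MvPolynomial.eval (thetaF (n := n)) P := by
        rw [hP, map_prod]
        exact Finset.prod_pos fun m hm => hDpos m (le_of_lt (Finset.mem_range.mp hm))
      exact mul_pos this this
    rw [hq, map_zero] at hpos
    exact lt_irrefl _ hpos
  · rw [hdet, ← hDk]
    have h1 : ∏ m ∈ Finset.range k, sig (hvec m * ncStar (hvec m))
        = ∏ m ∈ Finset.range k, (D m * D (m+1)) :=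
      Finset.prod_congr rfl fun m hm => key m (Finset.mem_range.mp hm)
    rw [h1, Finset.prod_mul_distrib]
    have h2 : ∏ m ∈ Finset.range k, D (m + 1) = P * D k := by
      have h3 := Finset.prod_range_succ' D k
      rw [Finset.prod_range_succ, hD0, mul_one] at h3
      rw [← h3, hP]
    rw [h2, hP]
    ring


end StatePoly
end

section
/- Let L : ℝ⟨x⟩ → ℝ be a unital ⋆-functional, i.e., a linear map with L(1) = 1 and L(p⋆) = L(p) for all p. If (a) L(pp⋆) ≥ 0 for all p ∈ ℝ⟨x⟩, and (b) there is N > 0 such that L(p(N − x_1² − ⋯ − x_n²)p⋆) ≥ 0 for all p ∈ ℝ⟨x⟩, then there exist a separable real Hilbert space H, a unit vector v ∈ H, and an n-tuple X of bounded self-adjoint operators on H such that L(p) = ⟨p(X)v, v⟩ for all p ∈ ℝ⟨x⟩. -/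
open scoped BigOperators Matrix Kronecker

namespace StatePoly

/-- A bundled real Hilbert space. -/
structure RealHilbertSpace where
  carrier : Type
  [nacg : NormedAddCommGroup carrier]
  [ips : InnerProductSpace ℝ carrier]
  [complete : CompleteSpace carrier]

attribute [instance] RealHilbertSpace.nacg RealHilbertSpace.ips RealHilbertSpace.complete

/-- The free algebra `ℝ⟨x⟩` on `n` symmetric variables, as a monoid algebra. -/
abbrev FreeNC (n : ℕ) := MonoidAlgebra ℝ (Word n)

/-- The involution `⋆` on `ℝ⟨x⟩`, fixing `ℝ ∪ {x_1,…,x_n}` and reversing words. -/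
noncomputable def freeStar {n : ℕ} (f : FreeNC n) : FreeNC n := MonoidAlgebra.ofCoeff (Finsupp.mapDomain wordRev f.coeff)

/-- The variable `x_i ∈ ℝ⟨x⟩`. -/
noncomputable def fX {n : ℕ} (i : Fin n) : FreeNC n := MonoidAlgebra.single (FreeMonoid.of i) 1

/-- Evaluation of `p ∈ ℝ⟨x⟩` at a tuple `X`, substituting `X_j` for `x_j`. -/
noncomputable def fEval {n : ℕ} {A : Type*} [Ring A] [Module ℝ A]
    (X : Fin n → A) (p : FreeNC n) : A :=
  Finsupp.sum p.coeff fun w c => c • wEvalL X (FreeMonoid.toList w)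

/-! ### Auxiliary lemmas for the GNS construction -/

section GNSAux

variable {n : ℕ}

lemma freeStar_single (w : Word n) (r : ℝ) :
    freeStar (MonoidAlgebra.single w r) = MonoidAlgebra.single (wordRev w) r :=
  MonoidAlgebra.coeff_injective (by simp [freeStar, MonoidAlgebra.coeff_single, Finsupp.mapDomain_single])

lemma freeStar_add (p q : FreeNC n) : freeStar (p + q) = freeStar p + freeStar q :=
  MonoidAlgebra.coeff_injective (by simp [freeStar, Finsupp.mapDomain_add])

lemma freeStar_one : freeStar (1 : FreeNC n) = 1 := by
  rw [MonoidAlgebra.one_def, freeStar_single]; rfl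

lemma freeStar_fX (i : Fin n) : freeStar (fX i) = fX i := by
  rw [fX, freeStar_single]; rfl

lemma wordRev_mul (a b : Word n) : wordRev (a * b) = wordRev b * wordRev a :=
  FreeMonoid.reverse_mul

lemma freeStar_mul (p q : FreeNC n) : freeStar (p * q) = freeStar q * freeStar p := by
  induction p using MonoidAlgebra.induction_linear with
  | zero => simp [freeStar]
  | add f g hf hg => rw [add_mul, freeStar_add, hf, hg, freeStar_add, mul_add]
  | single a r =>
    induction q using MonoidAlgebra.induction_linear with
    | zero => simp [freeStar]
    | add f g hf hg => rw [mul_add, freeStar_add, hf, hg, freeStar_add, add_mul]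
    | single b s =>
      rw [MonoidAlgebra.single_mul_single, freeStar_single, freeStar_single, freeStar_single,
        MonoidAlgebra.single_mul_single, wordRev_mul, mul_comm r s]

lemma freeStar_freeStar (p : FreeNC n) : freeStar (freeStar p) = p := by
  unfold freeStar
  rw [MonoidAlgebra.coeff_ofCoeff, ← Finsupp.mapDomain_comp,
    show wordRev ∘ wordRev = (id : Word n → Word n) from
      funext fun w => FreeMonoid.reverse_reverse,
    Finsupp.mapDomain_id]

end GNSAux

set_option maxHeartbeats 1000000 in
/-- Proposition `prop:moment`, a GNS-type construction.
Let `L : ℝ⟨x⟩ → ℝ` be a unital `⋆`-functional such that (a) `L(pp⋆) ≥ 0` for all `p`, and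
(b) for some `N > 0`, `L(p(N − x₁² − ⋯ − xₙ²)p⋆) ≥ 0` for all `p`.  Then there exist a
separable real Hilbert space `H`, a unit vector `v ∈ H` and a tuple `X` of bounded
self-adjoint operators on `H` with `L(p) = ⟨p(X)v, v⟩` for all `p ∈ ℝ⟨x⟩`. -/
theorem statement_6 (n : ℕ) (hn : 1 ≤ n) (L : FreeNC n →ₗ[ℝ] ℝ)
    (hL1 : L 1 = 1) (hLstar : ∀ p : FreeNC n, L (freeStar p) = L p)
    (hpos : ∀ p : FreeNC n, 0 ≤ L (p * freeStar p))
    (hbdd : ∃ N : ℝ, 0 < N ∧ ∀ p : FreeNC n,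
      0 ≤ L (p * (algebraMap ℝ (FreeNC n) N - ∑ i : Fin n, fX i ^ 2) * freeStar p)) :
    ∃ (𝓗 : RealHilbertSpace), TopologicalSpace.SeparableSpace 𝓗.carrier ∧
      ∃ (v : 𝓗.carrier) (X : Fin n → 𝓗.carrier →L[ℝ] 𝓗.carrier),
        ‖v‖ = 1 ∧ (∀ i, ContinuousLinearMap.adjoint (X i) = X i) ∧
        ∀ p : FreeNC n, L p = inner ℝ (fEval X p v) v := by
  classical
  obtain ⟨N, hN, hbdd⟩ := hbdd
  -- the symmetry of the bilinear form
  have hsymL : ∀ p q : FreeNC n, L (p * freeStar q) = L (q * freeStar p) := by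
    intro p q
    conv_rhs => rw [← hLstar (q * freeStar p)]
    rw [freeStar_mul, freeStar_freeStar]
  -- the pre-inner-product core
  letI c : PreInnerProductSpace.Core ℝ (FreeNC n) :=
    { inner := fun p q => L (p * freeStar q)
      conj_inner_symm := fun p q => by simpa using hsymL q p
      re_inner_nonneg := fun p => by simpa using hpos p
      add_left := fun p q r => by
        show L ((p + q) * freeStar r) = L (p * freeStar r) + L (q * freeStar r)
        rw [add_mul, map_add]
      smul_left := fun p q r => by
        show L ((r • p) * freeStar q) = (starRingEnd ℝ) r * L (p * freeStar q)
        rw [smul_mul_assoc, map_smul, smul_eq_mul]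
        simp }
  letI : SeminormedAddCommGroup (FreeNC n) :=
    @InnerProductSpace.Core.toSeminormedAddCommGroup ℝ (FreeNC n) _ _ _ c
  letI : NormedSpace ℝ (FreeNC n) :=
    InnerProductSpace.Core.toNormedSpace (c := c)
  letI : InnerProductSpace ℝ (FreeNC n) :=
    InnerProductSpace.ofCore c
  have hinnerV : ∀ p q : FreeNC n, (inner ℝ p q : ℝ) = L (p * freeStar q) := fun _ _ => rfl
  have hnormV : ∀ p : FreeNC n, ‖p‖ = Real.sqrt (L (p * freeStar p)) := fun _ => rfl
  -- the key positivity estimate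
  have hkey : ∀ (p : FreeNC n) (i : Fin n),
      L ((p * fX i) * freeStar (p * fX i)) ≤ N * L (p * freeStar p) := by
    intro p i
    have hterm : ∀ j : Fin n,
        p * fX j ^ 2 * freeStar p = (p * fX j) * freeStar (p * fX j) := by
      intro j
      rw [freeStar_mul, freeStar_fX, pow_two, ← mul_assoc, mul_assoc (p * fX j)]
    have hexp : p * (algebraMap ℝ (FreeNC n) N - ∑ j : Fin n, fX j ^ 2) * freeStar p
        = N • (p * freeStar p) - ∑ j : Fin n, (p * fX j) * freeStar (p * fX j) := by
      rw [mul_sub, sub_mul, Finset.mul_sum, Finset.sum_mul]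
      congr 1
      · rw [Algebra.algebraMap_eq_smul_one, mul_smul_comm, mul_one, smul_mul_assoc]
      · exact Finset.sum_congr rfl fun j _ => hterm j
    have h0 := hbdd p
    rw [hexp, map_sub, map_smul, map_sum, smul_eq_mul, sub_nonneg] at h0
    have hle : L ((p * fX i) * freeStar (p * fX i))
        ≤ ∑ j : Fin n, L ((p * fX j) * freeStar (p * fX j)) :=
      Finset.single_le_sum (fun j _ => hpos (p * fX j)) (Finset.mem_univ i)
    linarith
  -- the bounded right-multiplication operators on the free algebra
  have hTbound : ∀ (i : Fin n) (p : FreeNC n),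
      ‖LinearMap.mulRight ℝ (fX i) p‖ ≤ Real.sqrt N * ‖p‖ := by
    intro i p
    rw [LinearMap.mulRight_apply, hnormV, hnormV, ← Real.sqrt_mul hN.le]
    exact Real.sqrt_le_sqrt (hkey p i)
  set Tc : Fin n → FreeNC n →L[ℝ] FreeNC n :=
    fun i => (LinearMap.mulRight ℝ (fX i)).mkContinuous (Real.sqrt N) (hTbound i) with hTc
  have hTcApply : ∀ i p, Tc i p = p * fX i := fun _ _ => rfl
  -- the Hilbert space
  set H0 := SeparationQuotient (FreeNC n) with hH0
  set H := UniformSpace.Completion H0 with hH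
  -- the operators on the separation quotient
  set S : Fin n → H0 →L[ℝ] H0 := fun i =>
    (SeparationQuotient.mkCLM ℝ (FreeNC n)).comp
      ((Tc i).comp (SeparationQuotient.outCLM ℝ (FreeNC n))) with hS
  have hSApply : ∀ i (p : FreeNC n),
      S i (SeparationQuotient.mk p) = SeparationQuotient.mk (p * fX i) := by
    intro i p
    show SeparationQuotient.mk
      (Tc i (SeparationQuotient.outCLM ℝ (FreeNC n) (SeparationQuotient.mk p)))
        = SeparationQuotient.mk (p * fX i)
    have h1 : SeparationQuotient.mk
        (SeparationQuotient.outCLM ℝ (FreeNC n) (SeparationQuotient.mk p))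
          = SeparationQuotient.mk p := SeparationQuotient.mk_outCLM ℝ _
    rw [SeparationQuotient.mk_eq_mk] at h1 ⊢
    have := h1.map (Tc i).continuous
    rwa [hTcApply] at this
  -- the operators on the completion
  have hdense : DenseRange (⇑(UniformSpace.Completion.toComplL : H0 →L[ℝ] H)) :=
    UniformSpace.Completion.denseRange_coe
  have hui : IsUniformInducing (⇑(UniformSpace.Completion.toComplL : H0 →L[ℝ] H)) :=
    UniformSpace.Completion.isUniformInducing_coe H0
  set X : Fin n → H →L[ℝ] H := fun i =>
    (UniformSpace.Completion.toComplL.comp (S i)).extend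
      UniformSpace.Completion.toComplL with hX
  -- the canonical embedding
  set emb : FreeNC n → H := fun p => ((SeparationQuotient.mk p : H0) : H) with hemb
  have hXemb : ∀ i (p : FreeNC n), X i (emb p) = emb (p * fX i) := by
    intro i p
    have h1 : X i ((UniformSpace.Completion.toComplL : H0 →L[ℝ] H) (SeparationQuotient.mk p))
        = ((UniformSpace.Completion.toComplL : H0 →L[ℝ] H).comp (S i))
            (SeparationQuotient.mk p) :=
      ContinuousLinearMap.extend_eq
        ((UniformSpace.Completion.toComplL : H0 →L[ℝ] H).comp (S i))
        hdense hui (SeparationQuotient.mk p)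
    have h2 : ((UniformSpace.Completion.toComplL : H0 →L[ℝ] H).comp (S i))
            (SeparationQuotient.mk p)
        = (UniformSpace.Completion.toComplL : H0 →L[ℝ] H)
            (SeparationQuotient.mk (p * fX i)) := by
      rw [ContinuousLinearMap.comp_apply, hSApply]
    exact h1.trans h2
  have hinner : ∀ a b : FreeNC n, (inner ℝ (emb a) (emb b) : ℝ) = L (a * freeStar b) := by
    intro a b
    show (inner ℝ ((SeparationQuotient.mk a : H0) : H) ((SeparationQuotient.mk b : H0) : H) : ℝ) = _
    rw [UniformSpace.Completion.inner_coe, SeparationQuotient.inner_mk_mk]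
    exact hinnerV a b
  -- symmetry of the operators
  have hsym : ∀ i (x y : H), (inner ℝ (X i x) y : ℝ) = inner ℝ x (X i y) := by
    intro i x y
    refine UniformSpace.Completion.induction_on₂ x y ?_ ?_
    · exact isClosed_eq
        (UniformSpace.Completion.Continuous.inner
          ((X i).continuous.comp continuous_fst) continuous_snd)
        (UniformSpace.Completion.Continuous.inner
          continuous_fst ((X i).continuous.comp continuous_snd))
    · intro a b
      obtain ⟨p, rfl⟩ := SeparationQuotient.surjective_mk a
      obtain ⟨q, rfl⟩ := SeparationQuotient.surjective_mk b
      have e1 : ((SeparationQuotient.mk p : H0) : H) = emb p := rfl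
      have e2 : ((SeparationQuotient.mk q : H0) : H) = emb q := rfl
      rw [e1, e2, hXemb, hXemb, hinner, hinner, freeStar_mul, freeStar_fX, ← mul_assoc]
  have hadj : ∀ i, ContinuousLinearMap.adjoint (X i) = X i := by
    intro i
    exact ((ContinuousLinearMap.eq_adjoint_iff (X i) (X i)).mpr fun x y => hsym i x y).symm
  -- the vacuum vector
  set v : H := emb 1 with hv
  have hvnorm : ‖v‖ = 1 := by
    show ‖((SeparationQuotient.mk (1 : FreeNC n) : H0) : H)‖ = 1
    rw [UniformSpace.Completion.norm_coe, SeparationQuotient.norm_mk, hnormV,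
      one_mul, freeStar_one, hL1, Real.sqrt_one]
  -- evaluation of words
  have hword : ∀ (l : List (Fin n)) (p : FreeNC n),
      wEvalL X l (emb p)
        = emb (p * MonoidAlgebra.single (wordRev (FreeMonoid.ofList l)) 1) := by
    intro l
    induction l with
    | nil =>
      intro p
      have h1 : wEvalL X ([] : List (Fin n)) = 1 := by simp [wEvalL]
      have h2 : MonoidAlgebra.single (wordRev (FreeMonoid.ofList ([] : List (Fin n)))) (1:ℝ)
          = 1 := rfl
      rw [h1, h2, mul_one, ContinuousLinearMap.one_apply]
    | cons i t ih =>
      intro p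
      have h1 : wEvalL X (i :: t) = X i * wEvalL X t := by simp [wEvalL]
      rw [h1, ContinuousLinearMap.mul_apply, ih, hXemb, mul_assoc]
      congr 2
      rw [fX, MonoidAlgebra.single_mul_single, mul_one]
      congr 1
      have : FreeMonoid.ofList (i :: t) = FreeMonoid.of i * FreeMonoid.ofList t := rfl
      rw [this, wordRev_mul]
      rfl
  -- the moment identity
  have hmoment : ∀ p : FreeNC n, L p = inner ℝ (fEval X p v) v := by
    intro p
    have hfe : fEval X p v = ∑ w ∈ p.coeff.support, (p.coeff w • wEvalL X (FreeMonoid.toList w)) v := by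
      rw [fEval, Finsupp.sum, ContinuousLinearMap.sum_apply]
    rw [hfe, sum_inner]
    have hterm : ∀ w ∈ p.coeff.support,
        (inner ℝ ((p.coeff w • wEvalL X (FreeMonoid.toList w)) v) v : ℝ)
          = p.coeff w * L (MonoidAlgebra.single w 1) := by
      intro w _
      rw [ContinuousLinearMap.smul_apply, real_inner_smul_left]
      congr 1
      rw [hv, hword, one_mul, FreeMonoid.ofList_toList, hinner, freeStar_one, mul_one]
      rw [← freeStar_single, hLstar]
    rw [Finset.sum_congr rfl hterm]
    have hrep : p = ∑ w ∈ p.coeff.support, p.coeff w • MonoidAlgebra.single w (1:ℝ) := by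
      conv_lhs => rw [← MonoidAlgebra.sum_coeff_single p]
      rw [Finsupp.sum]
      refine Finset.sum_congr rfl fun w _ => ?_
      rw [MonoidAlgebra.smul_single', mul_one]
    conv_lhs => rw [hrep]
    rw [map_sum]
    refine Finset.sum_congr rfl fun w _ => ?_
    rw [map_smul, smul_eq_mul]
  -- separability
  haveI : Countable (Word n) := Countable.of_equiv (List (Fin n)) FreeMonoid.toList.symm
  haveI hsepV : TopologicalSpace.SeparableSpace (FreeNC n) := by
    have hc : (Set.range fun w : Word n =>
        (MonoidAlgebra.single w (1:ℝ) : FreeNC n)).Countable := Set.countable_range _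
    have hspan : Submodule.span ℝ (Set.range fun w : Word n =>
        (MonoidAlgebra.single w (1:ℝ) : FreeNC n)) = ⊤ := by
      rw [eq_top_iff]
      rintro p -
      have hrep : p = ∑ w ∈ p.coeff.support, p.coeff w • MonoidAlgebra.single w (1:ℝ) := by
        conv_lhs => rw [← MonoidAlgebra.sum_coeff_single p]
        rw [Finsupp.sum]
        refine Finset.sum_congr rfl fun w _ => ?_
        rw [MonoidAlgebra.smul_single', mul_one]
      rw [hrep]
      exact Submodule.sum_mem _ fun w _ =>
        Submodule.smul_mem _ _ (Submodule.subset_span ⟨w, rfl⟩)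
    rw [← TopologicalSpace.isSeparable_univ_iff]
    have hs := (hc.isSeparable).span (R := ℝ)
    rw [hspan] at hs
    simpa using hs
  haveI hsepH0 : TopologicalSpace.SeparableSpace H0 :=
    (SeparationQuotient.surjective_mk.denseRange).separableSpace
      SeparationQuotient.continuous_mk
  haveI hsepH : TopologicalSpace.SeparableSpace H :=
    UniformSpace.Completion.separableSpace_completion
  exact ⟨⟨H⟩, hsepH, v, X, hvnorm, hadj, hmoment⟩

end StatePoly
end
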